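/- Let m ∈ ℤ₂ with m ≡ 1 (mod 8) and √m the square root of m with √m ≡ 1 (mod 4). Let a, b ∈ ℚ₂, and choose the sign ± so that ord₂(a ± b) = min(ord₂(a + b), ord₂(a − b)). Then (a ± b√m)/(a ± b) is an odd 2-adic unit congruent to 1 mod 2ℤ₂ such that the Hilbert symbol (a ± b√m, 5)₂ equals (a ± b, 5)₂. -/

import Mathlib

/-- The Hilbert symbol at 2 equals `1`, expressed by the solvability of
`z² = a x² + b y²` nontrivially over `ℚ₂`. -/
def Hilbert2One (a b : ℚ_[2]) : Prop :=
  ∃ x y z : ℚ_[2], (x ≠ 0 ∨ y ≠ 0 ∨ z ≠ 0) ∧ z ^ 2 = a * x ^ 2 + b * y ^ 2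

lemma norm2 : ‖(2:ℤ_[2])‖ = 1/2 := by
  have := PadicInt.norm_p (p := 2)
  norm_num at this; rw [this]
lemma aux_sqrt (u : ℤ_[2]) (h : (8:ℤ_[2]) ∣ (u - 1)) : ∃ w : ℤ_[2], w ^ 2 = u := by
  have h1 : (Polynomial.X^2 - Polynomial.C u : Polynomial ℤ_[2]).eval 1 = 1 - u := by simp
  have h2 : (Polynomial.X^2 - Polynomial.C u : Polynomial ℤ_[2]).derivative.eval 1 = 2 := by
    simp; norm_num
  have hnorm : ‖(Polynomial.X^2 - Polynomial.C u : Polynomial ℤ_[2]).eval 1‖ <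
      ‖(Polynomial.X^2 - Polynomial.C u : Polynomial ℤ_[2]).derivative.eval 1‖ ^ 2 := by
    rw [h1, h2]
    obtain ⟨k, hk⟩ := h
    have he : (1 : ℤ_[2]) - u = 8 * (-k) := by rw [← neg_sub u 1, hk]; ring
    rw [he, norm_mul]
    have h8 : ‖(8:ℤ_[2])‖ = 1/8 := by
      have : (8:ℤ_[2]) = 2^3 := by norm_num
      rw [this, norm_pow, norm2]; norm_num
    rw [h8, norm2]
    have := PadicInt.norm_le_one (-k)
    nlinarith [norm_nonneg (-k)]
  obtain ⟨z, hz, -⟩ := hensels_lemma (F := Polynomial.X^2 - Polynomial.C u) (a := 1) hnorm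
  refine ⟨z, ?_⟩
  simpa [sub_eq_zero] using hz

lemma aux_dvd_of_toZModPow (v : ℤ_[2]) (h : PadicInt.toZModPow 3 v = 0) : (8 : ℤ_[2]) ∣ v := by
  have hk := PadicInt.ker_toZModPow (p := 2) 3
  have hv : v ∈ RingHom.ker (PadicInt.toZModPow (p := 2) 3) := h
  rw [hk, Ideal.mem_span_singleton] at hv
  have h8 : (((2:ℕ):ℤ_[2]))^3 = 8 := by norm_num
  rwa [h8] at hv
lemma aux_unit_zmod (u : ℤ_[2]) (hu : IsUnit u) : (PadicInt.toZModPow 3 u)^2 = 1 := by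
  have h := hu.map (PadicInt.toZModPow (p := 2) 3)
  revert h
  generalize (PadicInt.toZModPow (p := 2) 3) u = a
  revert a; decide
lemma aux_usq (u v : ℤ_[2]) (hu : IsUnit u) (hv : IsUnit v) :
    ∃ t : ℤ_[2], IsUnit t ∧ u^2 - 5*v^2 = 4*t := by
  have h8 : (8:ℤ_[2]) ∣ (u^2 - 5*v^2 + 4) := by
    apply aux_dvd_of_toZModPow
    have h1 := aux_unit_zmod u hu
    have h2 := aux_unit_zmod v hv
    rw [map_add, map_sub, map_mul, map_pow, map_pow, h1, h2, map_ofNat, map_ofNat]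
    decide
  obtain ⟨k, hk⟩ := h8
  refine ⟨2*k - 1, ?_, by linear_combination hk⟩
  have hdvd : ¬ ((2:ℕ):ℤ_[2]) ∣ (2*k-1) := by
    rintro ⟨c, hc⟩
    have h1 : (2:ℤ_[2])*(k - c) = 1 := by
      push_cast at hc
      linear_combination hc
    have := IsUnit.of_mul_eq_one _ h1
    rw [PadicInt.isUnit_iff, norm2] at this
    norm_num at this
  rw [← PadicInt.norm_lt_one_iff_dvd, not_lt] at hdvd
  rw [PadicInt.isUnit_iff]
  exact le_antisymm (PadicInt.norm_le_one _) hdvd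
lemma qnorm_zpow (m : ℤ) : ‖(2:ℚ_[2])^m‖ = (2:ℝ)^(-m) := by
  exact_mod_cast Padic.norm_p_zpow (p := 2) m
lemma qnorm5 : ‖(5:ℚ_[2])‖ = 1 := by
  have hle : ‖((5:ℤ):ℚ_[2])‖ ≤ 1 := Padic.norm_int_le_one 5
  have hlt : ¬ ‖((5:ℤ):ℚ_[2])‖ < 1 := by
    rw [Padic.norm_intCast_lt_one_iff]
    decide
  push_cast at hle hlt
  linarith [lt_or_eq_of_le hle]
lemma aux_decomp (x : ℚ_[2]) (hx : x ≠ 0) : ∃ (m : ℤ) (v : ℚ_[2]), ‖v‖ = 1 ∧ x = 2^m * v := by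
  have h2 : (2:ℚ_[2]) ≠ 0 := two_ne_zero
  have hz : ((2:ℚ_[2]))^(x.valuation) ≠ 0 := zpow_ne_zero _ h2
  refine ⟨x.valuation, x / 2^x.valuation, ?_, by field_simp⟩
  rw [norm_div, Padic.norm_eq_zpow_neg_valuation hx]
  have hn : ‖(2:ℚ_[2])^(x.valuation)‖ = (2:ℝ)^(-x.valuation) := by
    exact_mod_cast Padic.norm_p_zpow (p := 2) x.valuation
  rw [hn]
  push_cast
  rw [div_self]
  positivity

lemma zpow_sq (m : ℤ) : ((2:ℚ_[2])^m)^2 = 2^(2*m) := by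
  rw [← zpow_natCast ((2:ℚ_[2])^m) 2, ← zpow_mul]
  congr 1; ring

lemma aux_norm_form (z y : ℚ_[2]) (h : z ≠ 0 ∨ y ≠ 0) :
    ∃ (n : ℤ) (u : ℚ_[2]), ‖u‖ = 1 ∧ z^2 - 5*y^2 = 2^(2*n) * u := by
  have h2 : (2:ℚ_[2]) ≠ 0 := two_ne_zero
  by_cases hy : y = 0
  · have hz : z ≠ 0 := by tauto
    obtain ⟨m, v, hv, hzv⟩ := aux_decomp z hz
    refine ⟨m, v^2, by rw [norm_pow, hv]; norm_num, ?_⟩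
    rw [hy, hzv, mul_pow, zpow_sq]; ring
  · by_cases hz : z = 0
    · obtain ⟨m, w, hw, hyw⟩ := aux_decomp y hy
      refine ⟨m, -5*w^2, ?_, ?_⟩
      · rw [norm_mul, norm_neg, qnorm5, norm_pow, hw]; norm_num
      · rw [hz, hyw, mul_pow, zpow_sq]; ring
    · obtain ⟨j, v, hv, hzv⟩ := aux_decomp z hz
      obtain ⟨k, w, hw, hyw⟩ := aux_decomp y hy
      rcases lt_trichotomy j k with hlt | heq | hgt
      · refine ⟨j, v^2 - 2^(2*(k-j)) * (5 * w^2), ?_, ?_⟩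
        · have hsmall : ‖(2:ℚ_[2])^(2*(k-j)) * (5 * w^2)‖ < 1 := by
            rw [norm_mul, norm_mul, qnorm_zpow, qnorm5, norm_pow, hw]
            have : (2:ℝ)^(-(2*(k-j))) < 1 := zpow_lt_one_of_neg₀ one_lt_two (by omega)
            simpa using this
          have hone : ‖v^2‖ = 1 := by rw [norm_pow, hv]; norm_num
          rw [sub_eq_add_neg, Padic.add_eq_max_of_ne (by rw [hone, norm_neg]; linarith)]
          rw [hone, norm_neg]
          exact max_eq_left hsmall.le
        · rw [hzv, hyw, mul_pow, mul_pow, zpow_sq, zpow_sq, mul_sub]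
          rw [← mul_assoc, ← mul_assoc, ← zpow_add₀ h2]
          ring_nf
      · -- j = k
        subst heq
        set v' : ℤ_[2] := ⟨v, hv.le⟩ with hv'
        set w' : ℤ_[2] := ⟨w, hw.le⟩ with hw'
        have hvu : IsUnit v' := PadicInt.isUnit_iff.mpr (by rw [PadicInt.norm_def]; exact hv)
        have hwu : IsUnit w' := PadicInt.isUnit_iff.mpr (by rw [PadicInt.norm_def]; exact hw)
        obtain ⟨t, htu, hteq⟩ := aux_usq _ _ hvu hwu
        have hteq' : v^2 - 5*w^2 = 4*(t:ℚ_[2]) := by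
          have := congrArg (fun x : ℤ_[2] => (x : ℚ_[2])) hteq
          push_cast at this
          exact this
        refine ⟨j+1, (t:ℚ_[2]), ?_, ?_⟩
        · rw [← PadicInt.norm_def]; exact PadicInt.isUnit_iff.mp htu
        · rw [hzv, hyw, mul_pow, mul_pow, zpow_sq]
          have key2 : (2:ℚ_[2])^(2*j) * 4 = 2^(2*(j+1)) := by
            rw [show (4:ℚ_[2]) = (2:ℚ_[2])^(2:ℤ) from by norm_num, ← zpow_add₀ h2]
            congr 1; ring
          linear_combination ((2:ℚ_[2])^(2*j)) * hteq' + ((t:ℚ_[2])) * key2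
      · refine ⟨k, 2^(2*(j-k)) * v^2 - 5 * w^2, ?_, ?_⟩
        · have hsmall : ‖(2:ℚ_[2])^(2*(j-k)) * v^2‖ < 1 := by
            rw [norm_mul, qnorm_zpow, norm_pow, hv]
            have : (2:ℝ)^(-(2*(j-k))) < 1 := zpow_lt_one_of_neg₀ one_lt_two (by omega)
            simpa using this
          have hone : ‖5*w^2‖ = 1 := by rw [norm_mul, qnorm5, norm_pow, hw]; norm_num
          rw [sub_eq_add_neg, Padic.add_eq_max_of_ne (by rw [norm_neg, hone]; linarith)]
          rw [norm_neg, hone, max_eq_right hsmall.le]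
        · rw [hzv, hyw, mul_pow, mul_pow, zpow_sq, zpow_sq]
          have key : (2:ℚ_[2])^(2*k) * 2^(2*(j-k)) = 2^(2*j) := by
            rw [← zpow_add₀ h2]; congr 1; ring
          linear_combination (-(v^2)) * key

lemma aux_repr (c : ℚ_[2]) (n : ℤ) (u : ℚ_[2]) (hu : ‖u‖ = 1) (hc : c = 2^(2*n)*u) :
    ∃ z y : ℚ_[2], z^2 - 5*y^2 = c := by
  have h2 : (2:ℚ_[2]) ≠ 0 := two_ne_zero
  set u' : ℤ_[2] := ⟨u, hu.le⟩ with hu'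
  have huu : IsUnit u' := PadicInt.isUnit_iff.mpr (by rw [PadicInt.norm_def]; exact hu)
  have hdvd : (8:ℤ_[2]) ∣ (4*u' + 5 - 1) := by
    apply aux_dvd_of_toZModPow
    have h1 := huu.map (PadicInt.toZModPow (p := 2) 3)
    rw [map_sub, map_add, map_mul, map_ofNat, map_ofNat, map_one]
    revert h1
    generalize (PadicInt.toZModPow (p := 2) 3) u' = a
    revert a; decide
  obtain ⟨w, hw⟩ := aux_sqrt _ (by rwa [show (4:ℤ_[2])*u' + 5 - 1 = 4*u'+5-1 from rfl] at hdvd)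
  have hw' : (w:ℚ_[2])^2 = 4*u + 5 := by
    have := congrArg (fun x : ℤ_[2] => (x : ℚ_[2])) hw
    push_cast at this
    exact this
  refine ⟨2^(n-1) * (w:ℚ_[2]), 2^(n-1), ?_⟩
  have key : ((2:ℚ_[2])^(n-1))^2 * 4 = 2^(2*n) := by
    rw [zpow_sq, show (4:ℚ_[2]) = (2:ℚ_[2])^(2:ℤ) from by norm_num, ← zpow_add₀ h2]
    congr 1; ring
  rw [hc]
  linear_combination ((2:ℚ_[2])^(n-1))^2 * hw' + u * key

lemma aux_char (c : ℚ_[2]) (hc : c ≠ 0) :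
    Hilbert2One c 5 ↔ ∃ (n:ℤ) (u:ℚ_[2]), ‖u‖ = 1 ∧ c = 2^(2*n)*u := by
  have h2 : (2:ℚ_[2]) ≠ 0 := two_ne_zero
  constructor
  · rintro ⟨x, y, z, hnt, heq⟩
    by_cases hx : x = 0
    · exfalso
      have hzy : z ≠ 0 ∨ y ≠ 0 := by tauto
      obtain ⟨n, u, hu, hform⟩ := aux_norm_form z y hzy
      have : z^2 - 5*y^2 = 0 := by rw [heq, hx]; ring
      rw [hform] at this
      have hu0 : u ≠ 0 := by intro h; rw [h] at hu; simp at hu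
      exact (mul_ne_zero (zpow_ne_zero _ h2) hu0) this
    · have hzy : z ≠ 0 ∨ y ≠ 0 := by
        by_contra hcon
        push_neg at hcon
        rw [hcon.1, hcon.2] at heq
        have hcx : c * x^2 = 0 := by linear_combination -heq
        exact hc ((mul_eq_zero.mp hcx).resolve_right (pow_ne_zero _ hx))
      obtain ⟨n, u, hu, hform⟩ := aux_norm_form z y hzy
      obtain ⟨m, v, hv, hxv⟩ := aux_decomp x hx
      have hv0 : v ≠ 0 := by intro h; rw [h] at hv; simp at hv
      refine ⟨n - m, u / v^2, by rw [norm_div, hu, norm_pow, hv]; norm_num, ?_⟩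
      have hx2 : x^2 = 2^(2*m) * v^2 := by rw [hxv, mul_pow, zpow_sq]
      have e1 : c * (2^(2*m)*v^2) = 2^(2*n)*u := by
        rw [← hx2, ← hform, heq]; ring
      have key : (2:ℚ_[2])^(2*(n-m)) * 2^(2*m) = 2^(2*n) := by
        rw [← zpow_add₀ h2]; congr 1; ring
      have e2 : (2:ℚ_[2])^(2*(n-m)) * (u/v^2) * (2^(2*m)*v^2) = 2^(2*n)*u := by
        field_simp
        linear_combination u * key
      have hnz : (2:ℚ_[2])^(2*m)*v^2 ≠ 0 :=
        mul_ne_zero (zpow_ne_zero _ h2) (pow_ne_zero _ hv0)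
      exact mul_right_cancel₀ hnz (e1.trans e2.symm)
  · rintro ⟨n, u, hu, hcu⟩
    obtain ⟨z, y, hzy⟩ := aux_repr c n u hu hcu
    exact ⟨1, y, z, Or.inl one_ne_zero, by linear_combination hzy⟩

lemma qnorm2 : ‖(2:ℚ_[2])‖ = 1/2 := by
  have := Padic.norm_p (p := 2)
  norm_num at this; rw [this]

/-- let `m = 1 + 8x ∈ ℤ₂`, `s = √m` the square root with `s ≡ 1 (mod 4)`.
For `a, b ∈ ℚ₂` and a sign `ε = ±1` chosen so that `ord₂(a + εb)` is minimal among
`ord₂(a ± b)`, the quotient `(a + εbs)/(a + εb)` is an odd 2-adic unit (≡ 1 mod 2ℤ₂),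
and the Hilbert symbols `(a + εbs, 5)₂` and `(a + εb, 5)₂` agree. -/
theorem hilbert_sqrt_approx_five (m x s : ℤ_[2]) (hm : m = 1 + 8 * x)
    (hs : s ^ 2 = m) (hs4 : (4 : ℤ_[2]) ∣ (s - 1))
    (a b ε : ℚ_[2]) (hε : ε = 1 ∨ ε = -1)
    (hne : a + ε * b ≠ 0)
    (hmin : a - ε * b = 0 ∨ (a + ε * b).valuation ≤ (a - ε * b).valuation) :
    (∃ w : ℤ_[2],
        a + ε * b * (s : ℚ_[2]) = (a + ε * b) * (1 + 2 * (w : ℚ_[2]))) ∧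
    (Hilbert2One (a + ε * b * (s : ℚ_[2])) 5 ↔ Hilbert2One (a + ε * b) 5) := by
  have h2 : (2:ℚ_[2]) ≠ 0 := two_ne_zero
  obtain ⟨t, ht⟩ := hs4
  have hsq : (s:ℚ_[2]) = 1 + 4*(t:ℚ_[2]) := by
    have h0 := congrArg (fun u : ℤ_[2] => (u:ℚ_[2])) ht
    push_cast at h0
    have h4 : ((4:ℤ_[2]):ℚ_[2]) = 4 := by norm_cast
    rw [h4] at h0
    linear_combination h0
  have hDA : ‖a - ε*b‖ ≤ ‖a + ε*b‖ := by
    rcases hmin with h | h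
    · rw [h]; simp
    · by_cases hD : a - ε*b = 0
      · rw [hD]; simp
      · rw [Padic.norm_eq_zpow_neg_valuation hD, Padic.norm_eq_zpow_neg_valuation hne]
        exact zpow_le_zpow_right₀ (by norm_num) (neg_le_neg h)
  have hb2 : ‖2*(ε*b)‖ ≤ ‖a + ε*b‖ := by
    have he : 2*(ε*b) = (a + ε*b) + (-(a - ε*b)) := by ring
    rw [he]
    refine le_trans (Padic.nonarchimedean _ _) ?_
    rw [norm_neg]
    exact max_le le_rfl hDA
  have hApos : 0 < ‖a + ε*b‖ := norm_pos_iff.mpr hne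
  have hq : ‖2*(ε*b) / (a+ε*b)‖ ≤ 1 := by
    rw [norm_div]; exact (div_le_one hApos).mpr hb2
  set g : ℤ_[2] := ⟨2*(ε*b)/(a+ε*b), hq⟩ with hg
  have hgq : (g:ℚ_[2]) = 2*(ε*b)/(a+ε*b) := rfl
  have hgt : ((g*t : ℤ_[2]):ℚ_[2]) = (2*(ε*b)/(a+ε*b)) * (t:ℚ_[2]) := by
    push_cast
    rfl
  have main : a + ε * b * (s:ℚ_[2]) = (a + ε*b) * (1 + 2*((g*t : ℤ_[2]):ℚ_[2])) := by
    rw [hsq, hgt]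
    field_simp
    ring
  refine ⟨⟨g*t, main⟩, ?_⟩
  set r : ℚ_[2] := 1 + 2*((g*t : ℤ_[2]):ℚ_[2]) with hr
  have hrn : ‖r‖ = 1 := by
    have hsmall : ‖2*((g*t : ℤ_[2]):ℚ_[2])‖ < 1 := by
      rw [norm_mul, qnorm2, PadicInt.padic_norm_e_of_padicInt]
      have := PadicInt.norm_le_one (g*t)
      linarith
    rw [hr, Padic.add_eq_max_of_ne (by rw [norm_one]; linarith)]
    rw [norm_one]
    exact max_eq_left hsmall.le
  have hr0 : r ≠ 0 := by
    intro h; rw [h] at hrn; simp at hrn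
  rw [main, aux_char _ (mul_ne_zero hne hr0), aux_char _ hne]
  constructor
  · rintro ⟨n, u, hu, hcu⟩
    refine ⟨n, u/r, by rw [norm_div, hu, hrn]; norm_num, ?_⟩
    have : (a + ε*b) * r = 2^(2*n)*u := hcu
    field_simp
    linear_combination this
  · rintro ⟨n, u, hu, hcu⟩
    exact ⟨n, u*r, by rw [norm_mul, hu, hrn]; norm_num, by rw [hcu]; ring⟩
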